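/- Let $A$ be a set, $B \subseteq A$ finite with $|B| = b$, and $n \in \omega$. For $t \in \mathrm{fin}(A)^n$, define the equivalence relation $\sim_t$ on $A \setminus B$ by $a \sim_t a'$ iff for all $k < n$, $a \in t(k) \leftrightarrow a' \in t(k)$. Then for every fixed $u \in \mathrm{fin}(A)^n$, the set $\{t \in \mathrm{fin}(A)^n \mid {\sim_t} = {\sim_u}\}$ has cardinality at most $2^{(b + 2^n)\cdot n}$. -/
import Mathlib


/-- For `t : fin(A)ⁿ`, the equivalence `∼ₜ` on `A \ B` relates `a, a'` iff
they lie in the same coordinates of `t`. For fixed `u`, the set of `t` with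
`∼ₜ = ∼ᵤ` has at most `2^((|B| + 2ⁿ)·n)` elements. -/
theorem stmt_17 (A : Type) (B : Finset A) (n : ℕ) (u : Fin n → Finset A) :
    ({t : Fin n → Finset A |
        ∀ a a', a ∉ B → a' ∉ B →
          ((∀ k, a ∈ t k ↔ a' ∈ t k) ↔ (∀ k, a ∈ u k ↔ a' ∈ u k))} :
      Set (Fin n → Finset A)).Finite ∧
    ({t : Fin n → Finset A |
        ∀ a a', a ∉ B → a' ∉ B →
          ((∀ k, a ∈ t k ↔ a' ∈ t k) ↔ (∀ k, a ∈ u k ↔ a' ∈ u k))} :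
      Set (Fin n → Finset A)).ncard ≤ 2 ^ ((B.card + 2 ^ n) * n) := by
  classical
  set S : Set (Fin n → Finset A) := {t : Fin n → Finset A |
        ∀ a a', a ∉ B → a' ∉ B →
          ((∀ k, a ∈ t k ↔ a' ∈ t k) ↔ (∀ k, a ∈ u k ↔ a' ∈ u k))} with hS
  set F : (Fin n → Finset A) → (Fin n → Set {x // x ∈ B} × Set (Fin n → Prop)) :=
    fun t k => ({x | ↑x ∈ t k}, {v | ∃ a, a ∉ B ∧ (fun j => a ∈ u j) = v ∧ a ∈ t k})
    with hF
  have hinj : Set.InjOn F S := by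
    intro t ht t' ht' h
    funext k
    ext a
    have h1 : ({x : {x // x ∈ B} | ↑x ∈ t k} : Set _) = {x : {x // x ∈ B} | ↑x ∈ t' k} :=
      congrArg Prod.fst (congrFun h k)
    have h2 : ({v : Fin n → Prop | ∃ a, a ∉ B ∧ (fun j => a ∈ u j) = v ∧ a ∈ t k} : Set _)
        = {v : Fin n → Prop | ∃ a, a ∉ B ∧ (fun j => a ∈ u j) = v ∧ a ∈ t' k} :=
      congrArg Prod.snd (congrFun h k)
    by_cases hab : a ∈ B
    · have := Set.ext_iff.mp h1 ⟨a, hab⟩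
      simpa using this
    · constructor
      · intro hat
        have : (fun j => a ∈ u j) ∈
            ({v : Fin n → Prop | ∃ a, a ∉ B ∧ (fun j => a ∈ u j) = v ∧ a ∈ t' k} : Set _) := by
          rw [← h2]; exact ⟨a, hab, rfl, hat⟩
        obtain ⟨a', ha'B, hprof, hat'⟩ := this
        have hu : ∀ j, a ∈ u j ↔ a' ∈ u j := fun j =>
          (iff_of_eq (congrFun hprof j)).symm
        exact ((ht' a a' hab ha'B).mpr hu k).mpr hat'
      · intro hat
        have : (fun j => a ∈ u j) ∈
            ({v : Fin n → Prop | ∃ a, a ∉ B ∧ (fun j => a ∈ u j) = v ∧ a ∈ t k} : Set _) := by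
          rw [h2]; exact ⟨a, hab, rfl, hat⟩
        obtain ⟨a', ha'B, hprof, hat'⟩ := this
        have hu : ∀ j, a ∈ u j ↔ a' ∈ u j := fun j =>
          (iff_of_eq (congrFun hprof j)).symm
        exact ((ht a a' hab ha'B).mpr hu k).mpr hat'
  have hfin : S.Finite := Set.Finite.of_finite_image (Set.toFinite (F '' S)) hinj
  refine ⟨hfin, ?_⟩
  have hcard : Fintype.card (Fin n → Set {x // x ∈ B} × Set (Fin n → Prop))
      = 2 ^ ((B.card + 2 ^ n) * n) := by
    simp [Fintype.card_set, Fintype.card_prod, Fintype.card_fun, Fintype.card_prop]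
    ring
  calc S.ncard = (F '' S).ncard := (Set.ncard_image_of_injOn hinj).symm
    _ ≤ (Set.univ : Set (Fin n → Set {x // x ∈ B} × Set (Fin n → Prop))).ncard :=
        Set.ncard_le_ncard (Set.subset_univ _) (Set.finite_univ)
    _ = Fintype.card _ := by rw [Set.ncard_univ, Nat.card_eq_fintype_card]
    _ = 2 ^ ((B.card + 2 ^ n) * n) := hcard
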